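/- Main theorem (sign obstruction): if m ≡ 3 (mod 4) and n is even, then for every b : Σ^{n-1} → {0,1} the successor permutation f_S(x_1,...,x_n) = (x_2,...,x_n, x_1 + b(x_2,...,x_n) mod m) is not a single cycle of length m^n on Σ^n; equivalently, the digraph SB(m,n) has no Hamiltonian cycle. -/

import Mathlib

/-- The suffix `(x_2,…,x_n)` of `x = (x_1,…,x_n)`. -/
def sfx {m n : ℕ} (x : Fin n → ZMod m) : Fin (n - 1) → ZMod m :=
  fun j => x ⟨(j : ℕ) + 1, by have := j.isLt; omega⟩

/-- The successor map `f_S(x_1,…,x_n) = (x_2,…,x_n, x_1 + b(x_2,…,x_n))`. -/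
def fS {m n : ℕ} (b : (Fin (n - 1) → ZMod m) → ZMod m) (x : Fin n → ZMod m) :
    Fin n → ZMod m :=
  fun i => if h : (i : ℕ) + 1 < n then x ⟨(i : ℕ) + 1, h⟩
           else x ⟨0, Nat.lt_of_le_of_lt (Nat.zero_le _) i.isLt⟩ + b (sfx x)

open Equiv Equiv.Perm Finset

/-- The permutation of `α → β` induced by a permutation of `α`. -/
def indPerm (β : Type*) {α : Type*} (e : Equiv.Perm α) : Equiv.Perm (α → β) :=
  Equiv.arrowCongr e (Equiv.refl β)

lemma indPerm_apply (β : Type*) {α : Type*} (e : Equiv.Perm α) (f : α → β) :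
    indPerm β e f = f ∘ e.symm := rfl

lemma indPerm_one (β : Type*) {α : Type*} : indPerm β (1 : Equiv.Perm α) = 1 := by
  ext f x; rfl

lemma indPerm_mul (β : Type*) {α : Type*} (e₁ e₂ : Equiv.Perm α) :
    indPerm β (e₁ * e₂) = indPerm β e₁ * indPerm β e₂ := by
  ext f x
  simp [indPerm_apply, Equiv.Perm.mul_apply]
  rfl

/-- Sign of an odd-order permutation is 1. -/
lemma sign_eq_one_of_odd_pow {γ : Type*} [DecidableEq γ] [Fintype γ] {f : Equiv.Perm γ}
    {c : ℕ} (hc : Odd c) (h : f ^ c = 1) : Equiv.Perm.sign f = 1 := by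
  have h2 : (Equiv.Perm.sign f) ^ c = 1 := by
    rw [← map_pow, h, map_one]
  rcases Int.units_eq_one_or (Equiv.Perm.sign f) with h1 | h1
  · exact h1
  · rw [h1, hc.neg_one_pow] at h2
    exact absurd h2 (by decide)

/-- Sign of an involution in terms of its support. -/
lemma sign_involution : ∀ (c : ℕ) {γ : Type*} [DecidableEq γ] [Fintype γ] (f : Equiv.Perm γ),
    f.support.card = c → f * f = 1 → ∃ k, c = 2 * k ∧ Equiv.Perm.sign f = (-1 : ℤˣ) ^ k := by
  intro c
  induction c using Nat.strong_induction_on with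
  | _ c ih =>
    intro γ _ _ f hcard hff
    by_cases hf : f = 1
    · refine ⟨0, ?_, ?_⟩
      · rw [← hcard, hf]; simp
      · rw [hf]; simp
    · have hfx : ∀ x, f (f x) = x := fun x => by
        have := Equiv.congr_fun hff x
        simpa using this
      obtain ⟨a, ha⟩ : ∃ a, f a ≠ a := by
        by_contra h
        push_neg at h
        exact hf (Equiv.ext h)
      set b := f a with hb
      have hba : b ≠ a := ha
      have hfb : f b = a := hfx a
      set g := f * Equiv.swap a b with hgdef
      have hg_apply : ∀ x, g x = if x = a then a else if x = b then b else f x := by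
        intro x
        by_cases hxa : x = a
        · simp [hgdef, hxa, Equiv.swap_apply_left, hfb]
        · by_cases hxb : x = b
          · subst hxb
            simp only [hgdef, Equiv.Perm.mul_apply, Equiv.swap_apply_right, ← hb,
              if_neg hxa]
            simp
          · simp only [hgdef, Equiv.Perm.mul_apply, Equiv.swap_apply_of_ne_of_ne hxa hxb,
              if_neg hxa, if_neg hxb]
      have hgg : g * g = 1 := by
        ext x
        simp only [Equiv.Perm.mul_apply, Equiv.Perm.one_apply]
        by_cases hxa : x = a
        · simp [hg_apply, hxa]
        · by_cases hxb : x = b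
          · subst hxb
            rw [hg_apply b, if_neg hxa, if_pos rfl, hg_apply b, if_neg hxa, if_pos rfl]
          · rw [hg_apply x, if_neg hxa, if_neg hxb]
            have h1 : f x ≠ a := fun h => hxb (by rw [hb, ← h, hfx])
            have h2 : f x ≠ b := fun h => hxa (by rw [hb] at h; have := hfx x; rw [h] at this; rw [← this, hfx])
            rw [hg_apply, if_neg h1, if_neg h2, hfx]
      have hsupp : g.support = f.support \ {a, b} := by
        ext x
        simp only [Equiv.Perm.mem_support, Finset.mem_sdiff, Finset.mem_insert,
          Finset.mem_singleton]
        constructor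
        · intro hx
          by_cases hxa : x = a
          · exfalso; apply hx; rw [hg_apply, hxa]; simp
          · by_cases hxb : x = b
            · exfalso; apply hx; rw [hg_apply, hxb]; simp [hxb ▸ hxa]
            · rw [hg_apply, if_neg hxa, if_neg hxb] at hx
              exact ⟨hx, fun h => (h.elim hxa hxb)⟩
        · rintro ⟨hx, hab⟩
          push_neg at hab
          rw [hg_apply, if_neg hab.1, if_neg hab.2]
          exact hx
      have habs : {a, b} ⊆ f.support := by
        intro x hx
        simp only [Finset.mem_insert, Finset.mem_singleton] at hx
        rcases hx with rfl | rfl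
        · exact Equiv.Perm.mem_support.2 ha
        · exact Equiv.Perm.mem_support.2 (by rw [hfb]; exact Ne.symm hba)
      have hcard2 : ({a, b} : Finset γ).card = 2 := by
        rw [Finset.card_insert_of_notMem (by simp [Ne.symm hba]), Finset.card_singleton]
      have hgcard : g.support.card = c - 2 := by
        rw [hsupp, Finset.card_sdiff_of_subset habs, hcard2, hcard]
      have hcge : 2 ≤ c := by
        calc 2 = ({a, b} : Finset γ).card := hcard2.symm
        _ ≤ f.support.card := Finset.card_le_card habs
        _ = c := hcard
      obtain ⟨k', hk', hsg⟩ := ih (c - 2) (by omega) g hgcard hgg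
      refine ⟨k' + 1, by omega, ?_⟩
      have hfg : f = g * Equiv.swap a b := by
        rw [hgdef, mul_assoc, Equiv.swap_mul_self, mul_one]
      rw [hfg, map_mul, hsg, Equiv.Perm.sign_swap (Ne.symm hba), pow_succ]

section SwapSign

variable {β : Type*} [Fintype β] [DecidableEq β]

lemma indPerm_swap_apply {n : ℕ} (i j : Fin n) (f : Fin n → β) :
    indPerm β (Equiv.swap i j) f = f ∘ Equiv.swap i j := by
  rw [indPerm_apply, Equiv.symm_swap]

lemma indPerm_swap_fixed_iff {n : ℕ} {i j : Fin n} (hij : i ≠ j) (f : Fin n → β) :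
    indPerm β (Equiv.swap i j) f = f ↔ f i = f j := by
  rw [indPerm_swap_apply]
  constructor
  · intro h
    have := congrFun h i
    simpa [Equiv.swap_apply_left] using this.symm
  · intro h
    funext x
    by_cases hxi : x = i
    · simp [hxi, Equiv.swap_apply_left, h]
    · by_cases hxj : x = j
      · simp [hxj, Equiv.swap_apply_right, h]
      · simp [Equiv.swap_apply_of_ne_of_ne hxi hxj]

/-- Counting: functions with `f i = f j` number `card β ^ (n-1)`. -/
def eqSubtypeEquiv {n : ℕ} {i j : Fin n} (hij : i ≠ j) :
    {f : Fin n → β // f i = f j} ≃ ({x : Fin n // x ≠ j} → β) where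
  toFun f x := f.1 x.1
  invFun g := ⟨fun x => if h : x = j then g ⟨i, hij⟩ else g ⟨x, h⟩, by simp [hij]⟩
  left_inv f := by
    ext x
    by_cases hx : x = j
    · subst hx; simp [f.2]
    · simp [hx]
  right_inv g := by
    funext x
    simp [x.2]

lemma card_eq_subtype {n : ℕ} {i j : Fin n} (hij : i ≠ j) :
    Fintype.card {f : Fin n → β // f i = f j} = Fintype.card β ^ (n - 1) := by
  rw [Fintype.card_congr (eqSubtypeEquiv hij), Fintype.card_fun]
  congr 1
  have h1 : Fintype.card {x : Fin n // x ≠ j}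
      = Fintype.card (Fin n) - Fintype.card {x : Fin n // x = j} :=
    Fintype.card_subtype_compl _
  rw [h1, Fintype.card_subtype_eq, Fintype.card_fin]

lemma support_indPerm_swap_card {n : ℕ} {i j : Fin n} (hij : i ≠ j) :
    (indPerm β (Equiv.swap i j)).support.card
      = Fintype.card β ^ n - Fintype.card β ^ (n - 1) := by
  classical
  have h1 : (indPerm β (Equiv.swap i j)).support
      = Finset.univ.filter (fun f : Fin n → β => ¬ f i = f j) := by
    ext f
    simp only [Equiv.Perm.mem_support, Finset.mem_filter, Finset.mem_univ, true_and]
    rw [not_iff_not, indPerm_swap_fixed_iff hij]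
  rw [h1]
  have h2 : (Finset.univ.filter (fun f : Fin n → β => f i = f j)).card
      + (Finset.univ.filter (fun f : Fin n → β => ¬ f i = f j)).card
      = (Finset.univ : Finset (Fin n → β)).card :=
    Finset.card_filter_add_card_filter_not _
  have h3 : (Finset.univ.filter (fun f : Fin n → β => f i = f j)).card
      = Fintype.card β ^ (n - 1) := by
    rw [← Fintype.card_subtype, card_eq_subtype hij]
  have h4 : (Finset.univ : Finset (Fin n → β)).card = Fintype.card β ^ n := by
    rw [Finset.card_univ, Fintype.card_fun, Fintype.card_fin]
  rw [← h4, ← h3, ← h2, Nat.add_sub_cancel_left]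

lemma sign_indPerm_swap (hβ : Fintype.card β % 4 = 3) {n : ℕ} {i j : Fin n} (hij : i ≠ j) :
    Equiv.Perm.sign (indPerm β (Equiv.swap i j)) = -1 := by
  classical
  have hinvol : indPerm β (Equiv.swap i j) * indPerm β (Equiv.swap i j) = 1 := by
    rw [← indPerm_mul, Equiv.swap_mul_self, indPerm_one]
  obtain ⟨k, hk, hsign⟩ := sign_involution _ (indPerm β (Equiv.swap i j)) rfl hinvol
  rw [support_indPerm_swap_card hij] at hk
  have hn1 : 1 ≤ n := i.pos
  obtain ⟨M, hM⟩ : Odd (Fintype.card β ^ (n - 1)) := Odd.pow (Nat.odd_iff.mpr (by omega))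
  have hpow : Fintype.card β ^ n = Fintype.card β ^ (n - 1) * Fintype.card β := by
    rw [← pow_succ]
    congr 1
    omega
  obtain ⟨t, ht⟩ : ∃ t, Fintype.card β = 4 * t + 3 := ⟨Fintype.card β / 4, by omega⟩
  have hexp : Fintype.card β ^ n = (2 * M + 1) * (4 * t + 3) := by rw [hpow, hM, ht]
  rw [hexp, hM] at hk
  have hh1 : (2 * M + 1) * (4 * t + 3) = (2 * M + 1) * (4 * t + 2) + (2 * M + 1) := by ring
  have hh2 : (2 * M + 1) * (4 * t + 2) = 2 * ((2 * M + 1) * (2 * t + 1)) := by ring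
  have hkval : k = (2 * M + 1) * (2 * t + 1) := by omega
  have hkodd : Odd k := ⟨2 * M * t + M + t, by rw [hkval]; ring⟩
  rw [hsign, hkodd.neg_one_pow]

lemma sign_indPerm (hβ : Fintype.card β % 4 = 3) {n : ℕ} (e : Equiv.Perm (Fin n)) :
    Equiv.Perm.sign (indPerm β e) = Equiv.Perm.sign e := by
  classical
  refine Equiv.Perm.swap_induction_on e ?_ (fun f x y hxy ih => ?_)
  · rw [indPerm_one]; simp
  · rw [indPerm_mul, map_mul, map_mul, ih, sign_indPerm_swap hβ hxy,
      Equiv.Perm.sign_swap hxy]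

end SwapSign

section Concrete

/-- The prefix `(y_1,…,y_{n-1})`. -/
def pfx {m k : ℕ} (y : Fin (k + 1) → ZMod m) : Fin k → ZMod m := fun j => y j.castSucc

/-- The "bump" permutation: adds `b` of the prefix to the last coordinate. -/
def bumpPerm (m k : ℕ) (b : (Fin k → ZMod m) → ZMod m) : Equiv.Perm (Fin (k + 1) → ZMod m) where
  toFun y i := if (i : ℕ) = k then y i + b (pfx y) else y i
  invFun y i := if (i : ℕ) = k then y i - b (pfx y) else y i
  left_inv y := by
    have hp : pfx (fun i => if (i : ℕ) = k then y i + b (pfx y) else y i) = pfx y := by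
      funext j
      simp [pfx, Nat.ne_of_lt j.isLt]
    funext i
    by_cases hi : (i : ℕ) = k
    · simp only [hp, if_pos hi, add_sub_cancel_right]
    · simp only [if_neg hi]
  right_inv y := by
    have hp : pfx (fun i => if (i : ℕ) = k then y i - b (pfx y) else y i) = pfx y := by
      funext j
      simp [pfx, Nat.ne_of_lt j.isLt]
    funext i
    by_cases hi : (i : ℕ) = k
    · simp only [hp, if_pos hi, sub_add_cancel]
    · simp only [if_neg hi]

lemma bumpPerm_apply {m k : ℕ} (b : (Fin k → ZMod m) → ZMod m) (y : Fin (k + 1) → ZMod m) :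
    bumpPerm m k b y = fun i : Fin (k + 1) => if (i : ℕ) = k then y i + b (pfx y) else y i := rfl

lemma pfx_bumpPerm {m k : ℕ} (b : (Fin k → ZMod m) → ZMod m) (y : Fin (k + 1) → ZMod m) :
    pfx (bumpPerm m k b y) = pfx y := by
  funext j
  simp [bumpPerm_apply, pfx, Nat.ne_of_lt j.isLt]

lemma bumpPerm_iterate {m k : ℕ} (b : (Fin k → ZMod m) → ZMod m) (c : ℕ)
    (y : Fin (k + 1) → ZMod m) :
    (bumpPerm m k b)^[c] y
      = fun i : Fin (k + 1) => if (i : ℕ) = k then y i + (c : ZMod m) * b (pfx y) else y i := by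
  induction c with
  | zero => simp
  | succ c ih =>
    rw [Function.iterate_succ_apply', ih]
    have hp : pfx (fun i => if (i : ℕ) = k then y i + (c : ZMod m) * b (pfx y) else y i)
        = pfx y := by
      funext j
      simp [pfx, Nat.ne_of_lt j.isLt]
    funext i
    by_cases hi : (i : ℕ) = k
    · simp only [bumpPerm_apply, hp, if_pos hi]
      push_cast
      ring
    · simp only [bumpPerm_apply, if_neg hi]

lemma bumpPerm_pow_eq_one {m k : ℕ} [NeZero m] (b : (Fin k → ZMod m) → ZMod m) :
    (bumpPerm m k b) ^ m = 1 := by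
  ext y i
  have h : ((bumpPerm m k b) ^ m) y = (bumpPerm m k b)^[m] y := by
    rw [Equiv.Perm.iterate_eq_pow]
  rw [h, bumpPerm_iterate, ZMod.natCast_self]
  simp

/-- The rotation permutation on `Σ^n`. -/
def rotPerm (m k : ℕ) : Equiv.Perm (Fin (k + 1) → ZMod m) :=
  indPerm (ZMod m) (finRotate (k + 1))⁻¹

lemma rotPerm_apply {m k : ℕ} (y : Fin (k + 1) → ZMod m) (i : Fin (k + 1)) :
    rotPerm m k y i = y (finRotate (k + 1) i) := rfl

lemma fS_decomp (m k : ℕ) (b : (Fin k → ZMod m) → ZMod m) :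
    ⇑(bumpPerm m k b * rotPerm m k) = fS (n := k + 1) b := by
  funext x
  funext i
  show bumpPerm m k b (rotPerm m k x) i = fS b x i
  have hrot : ∀ j : Fin (k + 1), ∀ _hj : (j : ℕ) < k, finRotate (k + 1) j = ⟨(j : ℕ) + 1, by omega⟩ := by
    intro j hj
    apply Fin.ext
    rw [finRotate_succ_apply, Fin.val_add_one_of_lt]
    rw [Fin.lt_iff_val_lt_val, Fin.val_last]
    exact hj
  have hpfx : pfx (rotPerm m k x) = sfx (n := k + 1) x := by
    funext j
    rw [pfx, rotPerm_apply, hrot j.castSucc j.isLt]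
    rfl
  by_cases hi : (i : ℕ) = k
  · have hlast : i = Fin.last k := Fin.ext (by simpa using hi)
    rw [bumpPerm_apply]
    simp only [if_pos hi]
    rw [fS, dif_neg (by omega)]
    rw [hpfx, rotPerm_apply, hlast, finRotate_last]
    congr 1
  · have hik : (i : ℕ) < k := by have := i.isLt; omega
    rw [bumpPerm_apply]
    simp only [if_neg hi]
    rw [fS, dif_pos (by omega : (i : ℕ) + 1 < k + 1)]
    rw [rotPerm_apply, hrot i hik]

end Concrete

/-- main theorem, sign obstruction: if `m ≡ 3 (mod 4)` and `n`
is even, then for every choice function `b : Σ^{n-1} → {0,1}` the successor map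
`f_S` is not a single cycle through all `m^n` states of `Σ^n`; equivalently,
the digraph `SB(m,n)` has no Hamiltonian cycle. -/
theorem no_hamiltonian_cycle (m n : ℕ) (hm : m % 4 = 3) (hn : Even n) (hn0 : 0 < n)
    (b : (Fin (n - 1) → ZMod m) → ZMod m) (hb : ∀ y, b y = 0 ∨ b y = 1) :
    ¬ ∃ x : Fin n → ZMod m, ∀ y : Fin n → ZMod m, ∃ k : ℕ, (fS b)^[k] x = y := by
  rintro ⟨x, hx⟩
  haveI : NeZero m := ⟨by omega⟩
  obtain ⟨k, rfl⟩ : ∃ k, n = k + 1 := ⟨n - 1, by omega⟩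
  have hkodd : Odd k := by
    rw [Nat.odd_iff]
    obtain ⟨r, hr⟩ := hn
    omega
  have hmodd : Odd m := Nat.odd_iff.mpr (by omega)
  set F := bumpPerm m k b * rotPerm m k with hFdef
  have hFS : ⇑F = fS b := fS_decomp m k b
  -- orbit hypothesis in terms of powers of F
  have hx' : ∀ y : Fin (k + 1) → ZMod m, ∃ c : ℕ, (F ^ c) x = y := by
    intro y
    obtain ⟨c, hc⟩ := hx y
    refine ⟨c, ?_⟩
    rw [← Equiv.Perm.iterate_eq_pow, hFS]
    exact hc
  have key : ∀ c : ℕ, (F ^ c) x = x → F ^ c = 1 := by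
    intro c hc
    apply Equiv.ext
    intro z
    obtain ⟨e, he⟩ := hx' z
    rw [← he]
    show (F ^ c) ((F ^ e) x) = (1 : Equiv.Perm (Fin (k + 1) → ZMod m)) ((F ^ e) x)
    rw [Equiv.Perm.one_apply, ← Equiv.Perm.mul_apply, ← pow_add, add_comm c e, pow_add,
      Equiv.Perm.mul_apply, hc]
  set d := orderOf F with hddef
  have hd : F ^ d = 1 := pow_orderOf_eq_one F
  have hdpos : 0 < d := orderOf_pos F
  set g : Fin d → (Fin (k + 1) → ZMod m) := fun j => (F ^ (j : ℕ)) x with hgdef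
  have gsurj : Function.Surjective g := by
    intro y
    obtain ⟨c, hc⟩ := hx' y
    refine ⟨⟨c % d, Nat.mod_lt _ hdpos⟩, ?_⟩
    show (F ^ (c % d)) x = y
    rw [← hc]
    conv_rhs => rw [← Nat.div_add_mod c d]
    rw [pow_add, pow_mul, hd, one_pow, one_mul]
  have ginj_aux : ∀ a c : Fin d, (a : ℕ) ≤ (c : ℕ) → g a = g c → a = c := by
    intro a c hle hac
    have h1 : (F ^ ((a : ℕ) + ((c : ℕ) - (a : ℕ)))) x = (F ^ (a : ℕ)) x := by
      rw [Nat.add_sub_cancel' hle]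
      exact hac.symm
    rw [pow_add, Equiv.Perm.mul_apply] at h1
    have h2 : (F ^ ((c : ℕ) - (a : ℕ))) x = x := (F ^ (a : ℕ)).injective h1
    have hdvd := orderOf_dvd_of_pow_eq_one (key _ h2)
    rw [← hddef] at hdvd
    have hlt : (c : ℕ) - (a : ℕ) < d := by have := c.isLt; omega
    have hz : (c : ℕ) - (a : ℕ) = 0 := by
      by_contra hne
      exact absurd (Nat.le_of_dvd (by omega) hdvd) (by omega)
    exact Fin.ext (by omega)
  have ginj : Function.Injective g := by
    intro a c hac
    rcases le_total (a : ℕ) (c : ℕ) with h | h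
    · exact ginj_aux a c h hac
    · exact (ginj_aux c a h hac.symm).symm
  have hcard : d = Fintype.card (Fin (k + 1) → ZMod m) := by
    have := Fintype.card_of_bijective ⟨ginj, gsurj⟩
    rwa [Fintype.card_fin] at this
  have hNodd : Odd (Fintype.card (Fin (k + 1) → ZMod m)) := by
    rw [Fintype.card_fun, ZMod.card, Fintype.card_fin]
    exact hmodd.pow
  -- sign of F is 1 since F has odd order
  have hsignF1 : Equiv.Perm.sign F = 1 :=
    sign_eq_one_of_odd_pow (hcard ▸ hNodd) hd
  -- but sign of F is -1
  have hsignBump : Equiv.Perm.sign (bumpPerm m k b) = 1 :=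
    sign_eq_one_of_odd_pow hmodd (bumpPerm_pow_eq_one b)
  have hsignRot : Equiv.Perm.sign (rotPerm m k) = -1 := by
    rw [rotPerm, sign_indPerm (by rw [ZMod.card]; exact hm), map_inv, sign_finRotate,
      Nat.add_sub_cancel, hkodd.neg_one_pow]
    rfl
  have hsignF2 : Equiv.Perm.sign F = -1 := by
    rw [hFdef, map_mul, hsignBump, hsignRot, one_mul]
  rw [hsignF1] at hsignF2
  exact absurd hsignF2 (by decide)
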